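/- Let q be a power of a prime p, let 𝔽_q be a finite field with q elements, let X be a scheme locally of finite type over 𝔽_q, and let Fr_X : X → X be its q-power absolute Frobenius. Let V be the fixed-point subscheme of Fr_X, i.e. the equalizer of Fr_X and the identity morphism of X. Then the structure morphism V → Spec 𝔽_q is étale. -/

import Mathlib

open AlgebraicGeometry CategoryTheory CategoryTheory.Limits

universe u

instance etaleZLS : IsZariskiLocalAtSource @AlgebraicGeometry.Etale.{u} :=
  @HasRingHomProperty.instIsZariskiLocalAtSource @AlgebraicGeometry.Etale.{u} RingHom.Etale inferInstance

instance etaleSUC : MorphismProperty.IsStableUnderComposition @AlgebraicGeometry.Etale.{u} :=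
  AlgebraicGeometry.Etale.instIsMultiplicativeScheme.toIsStableUnderComposition

instance etaleCI : MorphismProperty.ContainsIdentities @AlgebraicGeometry.Etale.{u} :=
  AlgebraicGeometry.Etale.instIsMultiplicativeScheme.toContainsIdentities

instance etaleRI : MorphismProperty.RespectsIso @AlgebraicGeometry.Etale.{u} := etaleZLS.toRespects

open Polynomial in

theorem lemA (k : Type u) [Field k] [Fintype k] (q : ℕ) (hcard : Fintype.card k = q)
    (B : Type u) [CommRing B] (h : k →+* B) (hft : h.FiniteType)
    (hpow : ∀ b : B, b ^ q = b) :
    ∃ (ι : Type u) (_ : Finite ι) (θ : B ≃+* (ι → k)), ∀ c, θ (h c) = fun _ => c := by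
  have hq2 : 2 ≤ q := hcard ▸ Fintype.one_lt_card
  -- reduced
  have hred : IsReduced B := by
    constructor
    intro b hb
    obtain ⟨m, hm⟩ := hb
    have key : ∀ j : ℕ, b ^ (q ^ j) = b := by
      intro j
      induction j with
      | zero => simpa using hpow b
      | succ j ih => rw [pow_succ, pow_mul, ih, hpow]
    have hle : m ≤ q ^ m := le_trans (Nat.le_of_lt (Nat.lt_two_pow_self (n := m)))
      (Nat.pow_le_pow_left hq2 m)
    calc b = b ^ (q ^ m) := (key m).symm
    _ = b ^ m * b ^ (q ^ m - m) := by rw [← pow_add, Nat.add_sub_cancel' hle]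
    _ = 0 := by rw [hm, zero_mul]
  letI : Algebra k B := h.toAlgebra
  have hint : Algebra.IsIntegral k B := by
    constructor
    intro b
    refine ⟨X ^ q - X, Polynomial.monic_X_pow_sub ?_, ?_⟩
    · simpa using (by omega : 1 < q)
    · simp [hpow b]
  have hftA : Algebra.FiniteType k B := hft
  have hfin : Module.Finite k B := Algebra.IsIntegral.finite
  have hart : IsArtinianRing B := isArtinian_of_tower k inferInstance
  haveI : Finite (MaximalSpectrum B) := inferInstance
  refine ⟨MaximalSpectrum B, inferInstance, ?_⟩
  letI instF : ∀ I : MaximalSpectrum B, Field (B ⧸ I.asIdeal) :=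
    IsArtinianRing.fieldOfSubtypeIsMaximal B
  have key : ∀ I : MaximalSpectrum B,
      Function.Bijective ((Ideal.Quotient.mk I.asIdeal).comp h) := by
    intro I
    haveI : I.asIdeal.IsMaximal := I.isMaximal
    have hpowK : ∀ x : B ⧸ I.asIdeal, x ^ q = x := by
      intro x
      obtain ⟨b, rfl⟩ := Ideal.Quotient.mk_surjective (I := I.asIdeal) x
      rw [← map_pow, hpow]
    haveI : Module.Finite k (B ⧸ I.asIdeal) := Module.Finite.quotient k I.asIdeal
    haveI : Finite (B ⧸ I.asIdeal) := Module.finite_of_finite k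
    haveI : Fintype (B ⧸ I.asIdeal) := Fintype.ofFinite _
    have hinj : Function.Injective ((Ideal.Quotient.mk I.asIdeal).comp h) :=
      (Ideal.Quotient.mk I.asIdeal).comp h |>.injective
    have hcardle : Fintype.card (B ⧸ I.asIdeal) ≤ q := by
      classical
      have h0 : ((X : (B ⧸ I.asIdeal)[X]) ^ q - X).natDegree = q := by
        rw [Polynomial.natDegree_sub_eq_left_of_natDegree_lt] <;>
          simp [Polynomial.natDegree_X_pow]; omega
      have hne : ((X : (B ⧸ I.asIdeal)[X]) ^ q - X) ≠ 0 := by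
        intro hc; rw [hc] at h0; simp at h0; omega
      have hsub : (Finset.univ : Finset (B ⧸ I.asIdeal)).val ⊆ (X ^ q - X : (B ⧸ I.asIdeal)[X]).roots := by
        intro x hx
        rw [Polynomial.mem_roots hne]
        simp [IsRoot, hpowK]
      have := Polynomial.card_le_degree_of_subset_roots hsub
      have h0 : ((X : (B ⧸ I.asIdeal)[X]) ^ q - X).natDegree = q := by
        rw [Polynomial.natDegree_sub_eq_left_of_natDegree_lt] <;>
          simp [Polynomial.natDegree_X_pow]; omega
      simpa [h0] using this
    have : Fintype.card k ≤ Fintype.card (B ⧸ I.asIdeal) := Fintype.card_le_of_injective _ hinj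
    have hcardeq : Fintype.card k = Fintype.card (B ⧸ I.asIdeal) := by omega
    exact (Fintype.bijective_iff_injective_and_card _).mpr ⟨hinj, hcardeq⟩
  refine ⟨(IsArtinianRing.equivPi B).toRingEquiv.trans
    (RingEquiv.piCongrRight fun I => (RingEquiv.ofBijective _ (key I)).symm), ?_⟩
  intro c
  funext I
  simp only [RingEquiv.trans_apply, RingEquiv.piCongrRight_apply]
  have : (IsArtinianRing.equivPi B).toRingEquiv (h c) I = Ideal.Quotient.mk I.asIdeal (h c) := rfl
  rw [this]
  have : Ideal.Quotient.mk I.asIdeal (h c) = (RingEquiv.ofBijective _ (key I)) c := rfl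
  rw [this, RingEquiv.symm_apply_apply]



theorem lemB (k : Type u) [Field k] [Fintype k] (q : ℕ) (hcard : Fintype.card k = q)
    (B : Type u) [CommRing B] (h : k →+* B) (hft : h.FiniteType)
    (hpow : ∀ b : B, b ^ q = b) :
    IsEtale (Spec.map (CommRingCat.ofHom h)) := by
  obtain ⟨ι, hfin, θ, hθ⟩ := lemA k q hcard B h hft hpow
  have hconst : IsEtale (Spec.map (CommRingCat.ofHom (Pi.constRingHom ι k))) := by
    have hiso : IsIso (sigmaSpec (fun _ : ι => CommRingCat.of k)) := inferInstance
    rw [show Spec.map (CommRingCat.ofHom (Pi.constRingHom ι k)) =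
      (asIso (sigmaSpec (fun _ : ι => CommRingCat.of k))).inv ≫
        ((sigmaSpec (fun _ : ι => CommRingCat.of k)) ≫
          Spec.map (CommRingCat.ofHom (Pi.constRingHom ι k))) by rw [asIso_inv, IsIso.inv_hom_id_assoc]]
    have h2 : IsEtale ((sigmaSpec (fun _ : ι => CommRingCat.of k)) ≫
        Spec.map (CommRingCat.ofHom (Pi.constRingHom ι k))) := by
      apply IsZariskiLocalAtSource.of_openCover (P := @Etale) (sigmaOpenCover _)
      intro (i : ι)
      change Etale (Sigma.ι (fun _ : ι => Spec (CommRingCat.of k)) i ≫ _)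
      rw [← Category.assoc, ι_sigmaSpec, ← Spec.map_comp,
        show CommRingCat.ofHom (Pi.constRingHom ι k) ≫
            CommRingCat.ofHom (Pi.evalRingHom (fun _ : ι => (CommRingCat.of k : Type u)) i) =
              𝟙 _ by ext c; rfl,
        Spec.map_id]
      exact MorphismProperty.id_mem @Etale _
    exact MorphismProperty.comp_mem @Etale _ _
      (inferInstanceAs (Etale (asIso (sigmaSpec (fun _ : ι => CommRingCat.of k))).inv)) h2
  have hdecomp : CommRingCat.ofHom h = CommRingCat.ofHom (Pi.constRingHom ι k) ≫
      (θ.symm.toCommRingCatIso).hom := by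
    ext c
    exact (θ.symm_apply_apply (h c)).symm.trans (congrArg θ.symm (hθ c))
  rw [hdecomp, Spec.map_comp]
  exact MorphismProperty.comp_mem @Etale _ _
    (inferInstanceAs (Etale (Spec.map (θ.symm.toCommRingCatIso).hom))) hconst



theorem lemC (q : ℕ) (k : Type u) [Field k] [Fintype k] (hcard : Fintype.card k = q)
    (X : Scheme.{u}) (sX : X ⟶ Spec (CommRingCat.of k)) [LocallyOfFiniteType sX]
    (Fr : X ⟶ X) (hFr_base : ∀ x, Fr.base x = x)
    (hFr_app : ∀ (U : X.Opens) (hU : Fr ⁻¹ᵁ U = U) (s : Γ(X, U)),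
      Fr.app U s = X.presheaf.map (eqToHom hU).op (s ^ q))
    (U : X.Opens) (hUaff : IsAffineOpen U) :
    IsEtale (((equalizer.ι Fr (𝟙 X)) ⁻¹ᵁ U).ι ≫ (equalizer.ι Fr (𝟙 X) ≫ sX)) := by
  set ι := equalizer.ι Fr (𝟙 X) with hιdef
  have hι : ι ≫ Fr = ι := by
    have := equalizer.condition Fr (𝟙 X)
    rwa [Category.comp_id] at this
  have hU' : Fr ⁻¹ᵁ U = U := by
    ext x
    simp [hFr_base]
  set A : CommRingCat := Γ(X, U) with hAdef
  set φ : A ⟶ A := Fr.appLE U U hU'.ge with hφdef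
  have hφ : ∀ a : A, φ a = a ^ q := by
    intro a
    show (X.presheaf.map (homOfLE hU'.ge).op) (Fr.app U a) = a ^ q
    rw [hFr_app U hU', ← CategoryTheory.comp_apply, ← Functor.map_comp]
    have h1 : ((eqToHom hU').op ≫ (homOfLE hU'.ge).op) = 𝟙 (Opposite.op U) :=
      Subsingleton.elim _ _
    rw [h1, CategoryTheory.Functor.map_id]
    rfl
  set I : Ideal A := Ideal.span (Set.range fun a : A => a ^ q - a) with hIdef
  set B : CommRingCat := CommRingCat.of (A ⧸ I) with hBdef
  set π : A ⟶ B := CommRingCat.ofHom (Ideal.Quotient.mk I) with hπdef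
  have hπsurj : Function.Surjective π := Ideal.Quotient.mk_surjective
  have hπφ : φ ≫ π = π := by
    ext a
    show π (φ a) = π a
    rw [hφ]
    exact (Ideal.Quotient.mk_eq_mk_iff_sub_mem _ _).mpr (Ideal.subset_span ⟨a, rfl⟩)
  set j : Spec A ⟶ X := hUaff.fromSpec with hjdef
  have hjFr : Spec.map φ ≫ j = j ≫ Fr :=
    IsAffineOpen.SpecMap_appLE_fromSpec Fr hUaff hUaff hU'.ge
  set μ : Spec B ⟶ X := Spec.map π ≫ j with hμdef
  have hμ : μ ≫ Fr = μ ≫ 𝟙 X := by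
    rw [Category.comp_id, hμdef, Category.assoc, ← hjFr, ← Spec.map_comp_assoc, hπφ]
  set β : Spec B ⟶ equalizer Fr (𝟙 X) := equalizer.lift μ hμ with hβdef
  have hβι : β ≫ ι = μ := equalizer.lift_ι μ hμ
  set Vo : (equalizer Fr (𝟙 X)).Opens := ι ⁻¹ᵁ U with hVodef
  have hrange1 : Set.range (Vo.ι ≫ ι).base ⊆ Set.range j.base := by
    rw [hUaff.range_fromSpec]
    rintro _ ⟨t, rfl⟩
    have ht : Vo.ι.base t ∈ Vo := t.2
    rw [Scheme.Hom.comp_apply]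
    exact ht
  set ρ : (Vo : Scheme.{u}) ⟶ Spec A := IsOpenImmersion.lift j (Vo.ι ≫ ι) hrange1 with hρdef
  have hρ : ρ ≫ j = Vo.ι ≫ ι := IsOpenImmersion.lift_fac j (Vo.ι ≫ ι) hrange1
  have hρφ : ρ ≫ Spec.map φ = ρ := by
    rw [← cancel_mono j, Category.assoc, hjFr, ← Category.assoc, hρ, Category.assoc, hι]
  -- construct δ
  set r : A ⟶ Γ(Vo, ⊤) := (Scheme.ΓSpecIso A).inv ≫ ρ.appTop with hrdef
  have hrfac : ρ.appTop = (Scheme.ΓSpecIso A).hom ≫ r := by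
    rw [hrdef, Iso.hom_inv_id_assoc]
  have hrφ : ∀ a : A, r (φ a) = r a := by
    intro a
    have h2 : (ρ ≫ Spec.map φ).appTop = ρ.appTop := by rw [hρφ]
    rw [Scheme.Hom.comp_appTop] at h2
    -- (Spec.map φ).appTop ≫ ρ.appTop = ρ.appTop
    have h3 : (Scheme.ΓSpecIso A).inv ≫ (Spec.map φ).appTop ≫ ρ.appTop
        = (Scheme.ΓSpecIso A).inv ≫ ρ.appTop := by rw [h2]
    have h4 : φ ≫ (Scheme.ΓSpecIso A).inv ≫ ρ.appTop = (Scheme.ΓSpecIso A).inv ≫ ρ.appTop := by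
      rw [Scheme.ΓSpecIso_inv_naturality_assoc]
      exact h3
    exact congrArg (fun (g : A ⟶ Γ(Vo, ⊤)) => g a) h4
  have hIker : ∀ x ∈ I, r x = 0 := by
    intro x hx
    refine Submodule.span_induction ?_ ?_ ?_ ?_ hx
    · rintro _ ⟨a, rfl⟩
      have := hrφ a
      rw [hφ] at this
      rw [map_sub, this, sub_self]
    · simp
    · intro x y _ _ hx hy
      rw [map_add, hx, hy, add_zero]
    · intro c x _ hx
      rw [smul_eq_mul, map_mul, hx, mul_zero]
  set ψ : B ⟶ Γ(Vo, ⊤) := CommRingCat.ofHom (Ideal.Quotient.lift I r.hom hIker) with hψdef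
  have hπψ : π ≫ ψ = r := by
    ext a
    exact Ideal.Quotient.lift_mk I r.hom hIker
  set δ : (Vo : Scheme.{u}) ⟶ Spec B := Scheme.toSpecΓ Vo ≫ Spec.map ψ with hδdef
  have hδπ : δ ≫ Spec.map π = ρ := by
    rw [hδdef, Category.assoc, ← Spec.map_comp, hπψ, hrdef, Spec.map_comp,
      ← Scheme.toSpecΓ_naturality_assoc, ← SpecMap_ΓSpecIso_hom,
      ← Spec.map_comp, Iso.inv_hom_id, Spec.map_id, Category.comp_id]
  have hrange2 : Set.range β.base ⊆ Set.range Vo.ι.base := by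
    rw [Scheme.Opens.range_ι]
    rintro _ ⟨t, rfl⟩
    show β.base t ∈ (ι ⁻¹ᵁ U)
    have : ι.base (β.base t) = μ.base t := by
      rw [← Scheme.Hom.comp_apply, hβι]
    show ι.base (β.base t) ∈ U
    rw [this, hμdef, Scheme.Hom.comp_apply]
    have h5 : j.base ((Spec.map π).base t) ∈ Set.range j.base := Set.mem_range_self _
    rw [hUaff.range_fromSpec] at h5
    exact h5
  set β' : Spec B ⟶ (Vo : Scheme.{u}) := IsOpenImmersion.lift Vo.ι β hrange2 with hβ'def
  have hβ' : β' ≫ Vo.ι = β := IsOpenImmersion.lift_fac Vo.ι β hrange2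
  have h1 : δ ≫ β' = 𝟙 _ := by
    rw [← cancel_mono Vo.ι, Category.assoc, hβ', Category.id_comp, ← cancel_mono ι,
      Category.assoc, hβι, hμdef, ← Category.assoc, hδπ, hρ]
  have hmonoπ : Mono (Spec.map π) := by
    have : IsClosedImmersion (Spec.map π) := IsClosedImmersion.spec_of_surjective π hπsurj
    infer_instance
  have h2 : β' ≫ δ = 𝟙 _ := by
    rw [← cancel_mono (Spec.map π), Category.assoc, hδπ, Category.id_comp, ← cancel_mono j,
      Category.assoc, hρ, ← Category.assoc, hβ', hβι, hμdef]
  have hisoβ' : IsIso β' := ⟨δ, h2, h1⟩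
  -- assemble
  have hVoι : Vo.ι = inv β' ≫ β := by rw [← hβ', IsIso.inv_hom_id_assoc]
  have eTop : U ≤ sX ⁻¹ᵁ ⊤ := le_top
  set F := (isAffineOpen_top (Spec (CommRingCat.of k))).fromSpec with hFdef
  set g₁ : Γ(Spec (CommRingCat.of k), ⊤) ⟶ A := sX.appLE ⊤ U eTop with hg₁def
  have hjsX : Spec.map g₁ ≫ F = j ≫ sX :=
    IsAffineOpen.SpecMap_appLE_fromSpec sX (isAffineOpen_top _) hUaff eTop
  set σ : CommRingCat.of k ⟶ Γ(Spec (CommRingCat.of k), ⊤) :=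
    (Scheme.ΓSpecIso (CommRingCat.of k)).inv with hσdef
  set χ : CommRingCat.of k ⟶ B := σ ≫ g₁ ≫ π with hχdef
  have hFiso : IsIso F := by
    rw [hFdef, IsAffineOpen.fromSpec_top]
    infer_instance
  have hσiso : IsIso σ := inferInstance
  have hSpecσiso : IsIso (Spec.map σ) := inferInstance
  have hχSpec : Spec.map χ = Spec.map (g₁ ≫ π) ≫ Spec.map σ := by
    rw [hχdef, Spec.map_comp]
  have key : Vo.ι ≫ (ι ≫ sX) = inv β' ≫ Spec.map χ ≫ inv (Spec.map σ) ≫ F := by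
    rw [hVoι, Category.assoc]
    congr 1
    rw [← Category.assoc, hβι, hμdef, Category.assoc, ← hjsX, ← Spec.map_comp_assoc, hχSpec]
    simp only [Category.assoc, IsIso.hom_inv_id_assoc]
  rw [key]
  change Etale _
  rw [MorphismProperty.cancel_left_of_respectsIso (P := @Etale)]
  rw [show Spec.map χ ≫ inv (Spec.map σ) ≫ F = (Spec.map χ ≫ inv (Spec.map σ)) ≫ F from by
    simp only [Category.assoc]]
  rw [MorphismProperty.cancel_right_of_respectsIso (P := @Etale)]
  rw [MorphismProperty.cancel_right_of_respectsIso (P := @Etale)]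
  -- now étale of Spec.map χ
  have hg₁ft : RingHom.FiniteType g₁.hom :=
    HasRingHomProperty.appLE (P := @LocallyOfFiniteType) sX ‹_› ⟨⊤, isAffineOpen_top _⟩
      ⟨U, hUaff⟩ eTop
  have hσsurj : Function.Surjective σ := (ConcreteCategory.bijective_of_isIso σ).2
  have hχft : RingHom.FiniteType χ.hom := by
    have h6 : RingHom.FiniteType (g₁.hom.comp σ.hom) :=
      RingHom.FiniteType.comp hg₁ft (RingHom.FiniteType.of_surjective _ hσsurj)
    have h7 : χ.hom =
        RingHom.comp π.hom (g₁.hom.comp σ.hom) := rfl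
    rw [h7]
    exact RingHom.FiniteType.comp_surjective h6 hπsurj
  have hpowB : ∀ b : ↑B, b ^ q = b := by
    intro b
    obtain ⟨a, rfl⟩ := hπsurj b
    have h7 : π (φ a) = π a := congrArg (fun (g : A ⟶ B) => g a) hπφ
    show ((Ideal.Quotient.mk I) a : ↑B) ^ q = (Ideal.Quotient.mk I) a
    calc ((Ideal.Quotient.mk I) a : ↑B) ^ q = (Ideal.Quotient.mk I) (a ^ q) :=
        (map_pow (Ideal.Quotient.mk I) a q).symm
    _ = (Ideal.Quotient.mk I) (φ a) := by rw [hφ a]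
    _ = (Ideal.Quotient.mk I) a := h7
  exact lemB k q hcard (↑A ⧸ I) χ.hom hχft hpowB



/-- Let `q` be a power of a prime `p`, let `k` be a finite field with `q`
elements, and let `X` be a scheme locally of finite type over `k`. Let `Fr : X ⟶ X` be the
`q`-power absolute Frobenius of `X` (the morphism over `k` which is the identity on the
underlying topological space and raises sections to the `q`-th power). Let `V` be the
fixed-point subscheme of `Fr`, i.e. the equalizer of `Fr` and the identity of `X`. Then the
structure morphism `V → Spec k` is étale. -/
theorem stmt2 (p : ℕ) [Fact p.Prime] (n : ℕ) (hn : 0 < n) (q : ℕ) (hq : q = p ^ n)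
    (k : Type u) [Field k] [Fintype k] (hcard : Fintype.card k = q)
    (X : Scheme.{u}) (sX : X ⟶ Spec (CommRingCat.of k)) [LocallyOfFiniteType sX]
    (Fr : X ⟶ X) (hFr_over : Fr ≫ sX = sX)
    (hFr_base : ∀ x, Fr.base x = x)
    (hFr_app : ∀ (U : X.Opens) (hU : Fr ⁻¹ᵁ U = U) (s : Γ(X, U)),
      Fr.app U s = X.presheaf.map (eqToHom hU).op (s ^ q)) :
    IsEtale (equalizer.ι Fr (𝟙 X) ≫ sX) := by
  apply IsZariskiLocalAtSource.of_iSup_eq_top (P := @Etale)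
    (U := fun v : ↑↑(equalizer Fr (𝟙 X)).toPresheafedSpace => (equalizer.ι Fr (𝟙 X)) ⁻¹ᵁ
      ((X.affineCover.f (X.affineCover.idx ((equalizer.ι Fr (𝟙 X)).base v))).opensRange))
  · rw [eq_top_iff]
    rintro v -
    rw [TopologicalSpace.Opens.mem_iSup]
    exact ⟨v, X.affineCover.covers ((equalizer.ι Fr (𝟙 X)).base v)⟩
  · intro v
    exact lemC q k hcard X sX Fr hFr_base hFr_app _
      (isAffineOpen_opensRange (X.affineCover.f (X.affineCover.idx ((equalizer.ι Fr (𝟙 X)).base v))))
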